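/- Let P_pent(n) = (17+7√5)/22 · φ^{4n} − (40/33)·4ⁿ − 1/3 + (17−7√5)/22 · φ^{−4n} and P(n) = (25+9√5)/22 · φ^{4n} − (5/33)·4^{n+1} − 2/3 + (25−9√5)/22 · φ^{−4n}. Then the limit as n → ∞ of P_pent(n)/P(n+2) exists and equals (65 − 29√5)/10. -/

import Mathlib

open Real Filter

noncomputable def goldenφ : ℝ := (1 + Real.sqrt 5) / 2

noncomputable def Ppent (n : ℕ) : ℝ :=
  (17 + 7 * Real.sqrt 5) / 22 * goldenφ ^ (4 * n)
    - 40 / 33 * 4 ^ n - 1 / 3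
    + (17 - 7 * Real.sqrt 5) / 22 * (goldenφ ^ (4 * n))⁻¹

noncomputable def Ptot (n : ℕ) : ℝ :=
  (25 + 9 * Real.sqrt 5) / 22 * goldenφ ^ (4 * n)
    - 5 / 33 * 4 ^ (n + 1) - 2 / 3
    + (25 - 9 * Real.sqrt 5) / 22 * (goldenφ ^ (4 * n))⁻¹

theorem boatStar_IDS_jump_limit :
    Tendsto (fun n : ℕ => Ppent n / Ptot (n + 2)) atTop
      (nhds ((65 - 29 * Real.sqrt 5) / 10)) := by
  have hs : Real.sqrt 5 ^ 2 = 5 := Real.sq_sqrt (by norm_num)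
  have hs0 : (0:ℝ) ≤ Real.sqrt 5 := Real.sqrt_nonneg 5
  have hs2 : (2:ℝ) < Real.sqrt 5 := by nlinarith [hs, hs0]
  set s := Real.sqrt 5 with hsdef
  have hφ4 : goldenφ ^ 4 = (7 + 3*s)/2 := by
    show ((1 + s)/2) ^ 4 = (7 + 3*s)/2
    linear_combination ((s^2 + 4*s + 11)/16) * hs
  have hφ4pos : (0:ℝ) < goldenφ ^ 4 := by rw [hφ4]; linarith
  have hφ4ne : goldenφ ^ 4 ≠ 0 := ne_of_gt hφ4pos
  have h4lt : (4:ℝ) < goldenφ ^ 4 := by rw [hφ4]; linarith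
  set c : ℝ := (goldenφ ^ 4)⁻¹ with hcdef
  have hcpos : 0 < c := inv_pos.mpr hφ4pos
  have hcne : c ≠ 0 := ne_of_gt hcpos
  have hc1 : c < 1 := by
    rw [hcdef, inv_lt_one_iff₀]; right; linarith
  have h4c0 : (0:ℝ) ≤ 4 * c := by positivity
  have h4c1 : 4 * c < 1 := by
    rw [hcdef]
    rw [mul_inv_lt_iff₀ hφ4pos]
    linarith
  have hT1 : Tendsto (fun n : ℕ => c ^ n) atTop (nhds 0) :=
    tendsto_pow_atTop_nhds_zero_of_lt_one hcpos.le hc1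
  have hT2 : Tendsto (fun n : ℕ => (4 * c) ^ n) atTop (nhds 0) :=
    tendsto_pow_atTop_nhds_zero_of_lt_one h4c0 h4c1
  have hX : ∀ n : ℕ, (goldenφ ^ 4) ^ n ≠ 0 := fun n => pow_ne_zero n hφ4ne
  -- numerator rewriting
  have hnum : ∀ n : ℕ, Ppent n * c ^ n
      = (17 + 7*s)/22 - 40/33 * (4*c)^n - 1/3 * c^n + (17 - 7*s)/22 * (c^n * c^n) := by
    intro n
    unfold Ppent
    rw [pow_mul]
    rw [mul_pow]
    rw [hcdef, inv_pow]
    field_simp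
    ring
  have hden : ∀ n : ℕ, Ptot (n + 2) * c ^ n
      = (25 + 9*s)/22 * goldenφ^8 - 320/33 * (4*c)^n - 2/3 * c^n
        + (25 - 9*s)/22 * (goldenφ^8)⁻¹ * (c^n * c^n) := by
    intro n
    unfold Ptot
    have h1 : 4 * (n + 2) = 8 + 4 * n := by ring
    have h2 : (4:ℝ) ^ (n + 2 + 1) = 64 * 4 ^ n := by ring
    rw [h1, pow_add, pow_mul, h2]
    rw [mul_pow]
    rw [hcdef, inv_pow]
    have hφ8ne : goldenφ ^ 8 ≠ 0 := by
      have : goldenφ ^ 8 = (goldenφ^4)^2 := by ring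
      rw [this]; exact pow_ne_zero 2 hφ4ne
    field_simp
    ring
  have hkey : ∀ n : ℕ, Ppent n / Ptot (n + 2)
      = ((17 + 7*s)/22 - 40/33 * (4*c)^n - 1/3 * c^n + (17 - 7*s)/22 * (c^n * c^n))
        / ((25 + 9*s)/22 * goldenφ^8 - 320/33 * (4*c)^n - 2/3 * c^n
            + (25 - 9*s)/22 * (goldenφ^8)⁻¹ * (c^n * c^n)) := by
    intro n
    rw [← hnum, ← hden, mul_div_mul_right _ _ (pow_ne_zero n hcne)]
  have hφ8 : goldenφ ^ 8 = (47 + 21*s)/2 := by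
    have : goldenφ ^ 8 = (goldenφ^4)^2 := by ring
    rw [this, hφ4]
    linear_combination (9/4 : ℝ) * hs
  have hLpos : (0:ℝ) < (25 + 9*s)/22 * goldenφ^8 := by
    rw [hφ8]; nlinarith
  have hLne : (25 + 9*s)/22 * goldenφ^8 ≠ 0 := ne_of_gt hLpos
  have hTnum : Tendsto (fun n : ℕ =>
      (17 + 7*s)/22 - 40/33 * (4*c)^n - 1/3 * c^n + (17 - 7*s)/22 * (c^n * c^n))
      atTop (nhds ((17 + 7*s)/22)) := by
    have h := (((tendsto_const_nhds (α := ℕ) (x := ((17 + 7*s)/22 : ℝ)) (f := atTop)).sub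
        (hT2.const_mul (40/33))).sub
        (hT1.const_mul (1/3))).add ((hT1.mul hT1).const_mul ((17 - 7*s)/22))
    simpa using h
  have hTden : Tendsto (fun n : ℕ =>
      (25 + 9*s)/22 * goldenφ^8 - 320/33 * (4*c)^n - 2/3 * c^n
        + (25 - 9*s)/22 * (goldenφ^8)⁻¹ * (c^n * c^n))
      atTop (nhds ((25 + 9*s)/22 * goldenφ^8)) := by
    have h := (((tendsto_const_nhds (α := ℕ) (x := ((25 + 9*s)/22 * goldenφ^8 : ℝ)) (f := atTop)).sub
        (hT2.const_mul (320/33))).sub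
        (hT1.const_mul (2/3))).add ((hT1.mul hT1).const_mul ((25 - 9*s)/22 * (goldenφ^8)⁻¹))
    simpa using h
  have hval : (17 + 7*s)/22 / ((25 + 9*s)/22 * goldenφ^8) = (65 - 29*s)/10 := by
    rw [hφ8]
    have h1 : (25 + 9*s)/22 * ((47 + 21*s)/2) ≠ 0 := by nlinarith
    field_simp
    linear_combination (5481*s + 15207) * hs
  have := hTnum.div hTden hLne
  rw [hval] at this
  have hfun : (fun n : ℕ => Ppent n / Ptot (n + 2))
      = fun n : ℕ =>
      ((17 + 7*s)/22 - 40/33 * (4*c)^n - 1/3 * c^n + (17 - 7*s)/22 * (c^n * c^n))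
        / ((25 + 9*s)/22 * goldenφ^8 - 320/33 * (4*c)^n - 2/3 * c^n
            + (25 - 9*s)/22 * (goldenφ^8)⁻¹ * (c^n * c^n)) := funext hkey
  rw [hfun]
  exact this
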